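/- arXiv:1809.10127 — 2 statements merged into one kernel-verified Lean document; each statement's English description precedes it below -/
import Mathlib

section
/- Let F(X, Y) ∈ ℤ_p[[X, Y]] be a nonzero power series, written as F = p^a · G with G ∉ p·ℤ_p[[X,Y]]. There exist integers b, c ≥ 0 and n_0 such that for all pairs (w_1, w_2) of p-power roots of unity with ord(w_1) = m, ord(w_2) = n, m ≥ n_0, and n − m sufficiently large, one has ord_p(F(w_1 − 1, w_2 − 1)) = a + b/φ(p^m) + c/φ(p^n). -/
open Finset

section ValAux

variable {K : Type*} [Field K] (v : K → ℚ)

private lemma aux_vone (hmul : ∀ x y : K, x ≠ 0 → y ≠ 0 → v (x * y) = v x + v y) :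
    v 1 = 0 := by
  have h := hmul 1 1 one_ne_zero one_ne_zero
  rw [mul_one] at h; linarith

private lemma aux_vneg (hmul : ∀ x y : K, x ≠ 0 → y ≠ 0 → v (x * y) = v x + v y)
    {x : K} (hx : x ≠ 0) : v (-x) = v x := by
  have h1 : v ((-1 : K) * (-1)) = v (-1 : K) + v (-1 : K) :=
    hmul _ _ (by norm_num) (by norm_num)
  rw [neg_one_mul, neg_neg] at h1
  have hone := aux_vone v hmul
  have hm1 : v (-1 : K) = 0 := by linarith
  have h2 := hmul (-1) x (by norm_num) hx
  rw [neg_one_mul] at h2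
  rw [h2, hm1, zero_add]

private lemma aux_vpow (hmul : ∀ x y : K, x ≠ 0 → y ≠ 0 → v (x * y) = v x + v y)
    {x : K} (hx : x ≠ 0) (k : ℕ) : v (x ^ k) = (k : ℚ) * v x := by
  induction k with
  | zero => simpa using aux_vone v hmul
  | succ n ih =>
      rw [pow_succ, hmul _ _ (pow_ne_zero _ hx) hx, ih]
      push_cast; ring

private lemma aux_vadd (hmul : ∀ x y : K, x ≠ 0 → y ≠ 0 → v (x * y) = v x + v y)
    (hadd : ∀ x y : K, x ≠ 0 → y ≠ 0 → x + y ≠ 0 → min (v x) (v y) ≤ v (x + y))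
    {x y : K} (hx : x ≠ 0) (hy : y ≠ 0) (hlt : v x < v y) :
    x + y ≠ 0 ∧ v (x + y) = v x := by
  have hne : x + y ≠ 0 := by
    intro h
    have hyx : y = -x := by linear_combination h
    rw [hyx, aux_vneg v hmul hx] at hlt
    exact lt_irrefl _ hlt
  refine ⟨hne, ?_⟩
  have h1 : v x ≤ v (x + y) := by
    have := hadd x y hx hy hne
    rw [min_eq_left hlt.le] at this
    exact this
  have h2 : v (x + y) ≤ v x := by
    by_contra hc
    push_neg at hc
    have h3 := hadd (x + y) (-y) hne (neg_ne_zero.2 hy) (by simpa using hx)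
    rw [aux_vneg v hmul hy, add_neg_cancel_right] at h3
    have := lt_min hc hlt
    linarith [h3]
  linarith

private lemma aux_vadd_sum (hmul : ∀ x y : K, x ≠ 0 → y ≠ 0 → v (x * y) = v x + v y)
    (hadd : ∀ x y : K, x ≠ 0 → y ≠ 0 → x + y ≠ 0 → min (v x) (v y) ≤ v (x + y))
    {ι : Type*} {x : K} (hx : x ≠ 0) (T : Finset ι) (f : ι → K)
    (h : ∀ s ∈ T, f s = 0 ∨ v x < v (f s)) :
    x + ∑ s ∈ T, f s ≠ 0 ∧ v (x + ∑ s ∈ T, f s) = v x := by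
  classical
  induction T using Finset.induction_on with
  | empty => exact ⟨by simpa using hx, by simp⟩
  | @insert a T ha ih =>
      have ih' := ih (fun s hs => h s (Finset.mem_insert_of_mem hs))
      rw [Finset.sum_insert ha]
      have hrw : x + (f a + ∑ s ∈ T, f s) = (x + ∑ s ∈ T, f s) + f a := by ring
      rw [hrw]
      by_cases hfa : f a = 0
      · rw [hfa, add_zero]; exact ih'
      · have hlt := (h a (Finset.mem_insert_self a T)).resolve_left hfa
        have hkey := aux_vadd v hmul hadd ih'.1 hfa (by rw [ih'.2]; exact hlt)
        exact ⟨hkey.1, by rw [hkey.2, ih'.2]⟩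
  
private lemma aux_vsum (hmul : ∀ x y : K, x ≠ 0 → y ≠ 0 → v (x * y) = v x + v y)
    (hadd : ∀ x y : K, x ≠ 0 → y ≠ 0 → x + y ≠ 0 → min (v x) (v y) ≤ v (x + y))
    {ι : Type*} (S : Finset ι) (f : ι → K) (s₀ : ι) (hs₀ : s₀ ∈ S)
    (h0 : f s₀ ≠ 0) (h : ∀ s ∈ S, s ≠ s₀ → f s = 0 ∨ v (f s₀) < v (f s)) :
    (∑ s ∈ S, f s) ≠ 0 ∧ v (∑ s ∈ S, f s) = v (f s₀) := by
  classical
  rw [← Finset.add_sum_erase S f hs₀]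
  exact aux_vadd_sum v hmul hadd h0 _ f
    (fun s hs => h s (Finset.mem_of_mem_erase hs) (Finset.ne_of_mem_erase hs))

private lemma aux_vprod (hmul : ∀ x y : K, x ≠ 0 → y ≠ 0 → v (x * y) = v x + v y)
    {ι : Type*} (S : Finset ι) (f : ι → K) (h : ∀ s ∈ S, f s ≠ 0) :
    (∏ s ∈ S, f s) ≠ 0 ∧ v (∏ s ∈ S, f s) = ∑ s ∈ S, v (f s) := by
  classical
  induction S using Finset.induction_on with
  | empty => exact ⟨one_ne_zero, by simpa using aux_vone v hmul⟩
  | @insert a T ha ih =>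
      have ih' := ih (fun s hs => h s (Finset.mem_insert_of_mem hs))
      have hfa : f a ≠ 0 := h a (Finset.mem_insert_self a T)
      rw [Finset.prod_insert ha, Finset.sum_insert ha]
      exact ⟨mul_ne_zero hfa ih'.1, by rw [hmul _ _ hfa ih'.1, ih'.2]⟩

end ValAux

section PadicAux

variable {p : ℕ} [hp : Fact p.Prime]

private lemma aux_val_of_not_dvd {x : ℤ_[p]} (h : ¬ (p : ℤ_[p]) ∣ x) :
    x ≠ 0 ∧ x.valuation = 0 := by
  have hx : x ≠ 0 := by rintro rfl; exact h (dvd_zero _)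
  have h1 : ¬ ‖x‖ < 1 := fun hc => h ((PadicInt.norm_lt_one_iff_dvd x).1 hc)
  have hnorm : ‖x‖ = 1 := le_antisymm x.norm_le_one (not_lt.1 h1)
  refine ⟨hx, ?_⟩
  have hv0 : ¬ ((1 : ℕ) : ℤ) ≤ x.valuation := by
    intro hc
    have h2 := (PadicInt.norm_le_pow_iff_le_valuation x hx 1).2 (by exact_mod_cast hc)
    rw [hnorm] at h2
    have hp1 : (1 : ℝ) < p := by exact_mod_cast hp.out.one_lt
    have h3 : (p : ℝ) ^ (-(1 : ℕ) : ℤ) < 1 := by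
      rw [Nat.cast_one, zpow_neg, zpow_one]
      exact inv_lt_one_of_one_lt₀ hp1
    linarith
  have := Nat.zero_le x.valuation
  omega

private lemma aux_val_of_dvd {x : ℤ_[p]} (hx : x ≠ 0) (h : (p : ℤ_[p]) ∣ x) :
    1 ≤ x.valuation := by
  obtain ⟨c, rfl⟩ := h
  have hc : c ≠ 0 := by rintro rfl; simp at hx
  have h1 := PadicInt.valuation_p_pow_mul 1 c hc
  rw [pow_one] at h1
  rw [h1]
  have := Nat.zero_le c.valuation
  push_cast at h1 ⊢
  linarith

variable {K : Type*} [Field K] [Algebra ℤ_[p] K]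

private lemma aux_map_ne (v : K → ℚ)
    (hcompat : ∀ x : ℤ_[p], x ≠ 0 → v (algebraMap ℤ_[p] K x) = (x.valuation : ℚ))
    {x : ℤ_[p]} (hx : x ≠ 0) : algebraMap ℤ_[p] K x ≠ 0 := by
  intro h0
  have hpne : ((p : ℤ_[p])) ≠ 0 := by
    exact_mod_cast (Nat.cast_ne_zero (R := ℤ_[p])).2 hp.out.ne_zero
  by_cases hpz : algebraMap ℤ_[p] K (p : ℤ_[p]) = 0
  · have h1 := hcompat (p : ℤ_[p]) hpne
    have h2 := hcompat ((p : ℤ_[p]) ^ 2) (pow_ne_zero _ hpne)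
    rw [map_pow, hpz, zero_pow (by norm_num : (2:ℕ) ≠ 0)] at h2
    rw [hpz] at h1
    have hval2 : ((p : ℤ_[p]) ^ 2).valuation = 2 := by
      have h3 := PadicInt.valuation_p_pow_mul 2 (1 : ℤ_[p]) one_ne_zero
      rw [mul_one, PadicInt.valuation_one, add_zero] at h3
      exact h3
    rw [PadicInt.valuation_p] at h1
    rw [hval2] at h2
    rw [h1] at h2
    norm_num at h2
  · have hspec := PadicInt.unitCoeff_spec hx
    have hmap : algebraMap ℤ_[p] K x =
        algebraMap ℤ_[p] K ((PadicInt.unitCoeff hx : ℤ_[p])) *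
          (algebraMap ℤ_[p] K (p : ℤ_[p])) ^ x.valuation := by
      conv_lhs => rw [hspec]
      rw [map_mul, map_pow]
    rw [hmap] at h0
    have hu : algebraMap ℤ_[p] K ((PadicInt.unitCoeff hx : ℤ_[p])) ≠ 0 :=
      ((PadicInt.unitCoeff hx).isUnit.map (algebraMap ℤ_[p] K)).ne_zero
    rcases mul_eq_zero.1 h0 with h | h
    · exact hu h
    · exact hpz (pow_eq_zero_iff'.1 h).1

end PadicAux


section RootAux

variable {p : ℕ} [hp : Fact p.Prime] {K : Type*} [Field K] (v : K → ℚ)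

private lemma aux_geom_le
    (hmul : ∀ x y : K, x ≠ 0 → y ≠ 0 → v (x * y) = v x + v y)
    (hadd : ∀ x y : K, x ≠ 0 → y ≠ 0 → x + y ≠ 0 → min (v x) (v y) ≤ v (x + y))
    {m : ℕ} (hm : 1 ≤ m) {w : K} (hw : IsPrimitiveRoot w (p ^ m))
    {k : ℕ} (hk0 : 0 < k) (hklt : k < p ^ m) :
    v (w - 1) ≤ v (w ^ k - 1) := by
  have hppos : 0 < p ^ m := pow_pos hp.out.pos m
  have hp1 : 1 < p ^ m := Nat.one_lt_pow (by omega) hp.out.one_lt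
  have hw0 : w ≠ 0 := hw.ne_zero (by omega)
  have hvw : v w = 0 := by
    have h1 := aux_vpow v hmul hw0 (p ^ m)
    rw [hw.pow_eq_one, aux_vone v hmul] at h1
    have hne : ((p ^ m : ℕ) : ℚ) ≠ 0 := by positivity
    rcases mul_eq_zero.1 h1.symm with h | h
    · exact absurd h hne
    · exact h
  have hpowne : ∀ t, 0 < t → t < p ^ m → w ^ t ≠ 1 := fun t h1 h2 =>
    hw.pow_ne_one_of_pos_of_lt h1.ne' h2
  have hSne : ∀ t, 0 < t → t < p ^ m → (∑ j ∈ Finset.range t, w ^ j) ≠ 0 := by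
    intro t h1 h2 h0
    have hg := geom_sum_mul w t
    rw [h0, zero_mul] at hg
    exact hpowne t h1 h2 (by linear_combination -hg)
  have hSv : ∀ t, 0 < t → t < p ^ m → 0 ≤ v (∑ j ∈ Finset.range t, w ^ j) := by
    intro t
    induction t with
    | zero => omega
    | succ s ih =>
        intro h1 h2
        rcases Nat.eq_zero_or_pos s with hs | hs
        · subst hs; simpa using le_of_eq (aux_vone v hmul).symm
        · rw [Finset.sum_range_succ]
          have hs2 : s < p ^ m := by omega
          have h3 := hadd _ _ (hSne s hs hs2) (pow_ne_zero s hw0)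
            (by rw [← Finset.sum_range_succ]; exact hSne (s + 1) h1 h2)
          rw [aux_vpow v hmul hw0 s, hvw, mul_zero] at h3
          have h4 := ih hs hs2
          calc (0:ℚ) ≤ min (v (∑ j ∈ Finset.range s, w ^ j)) 0 := le_min h4 le_rfl
            _ ≤ _ := h3
  have hgeq := geom_sum_mul w k
  have hw1 : w - 1 ≠ 0 := sub_ne_zero.2 (hw.ne_one hp1)
  have h5 : v (w ^ k - 1) = v (∑ j ∈ Finset.range k, w ^ j) + v (w - 1) := by
    rw [← hgeq]; exact hmul _ _ (hSne k hk0 hklt) hw1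
  have h6 := hSv k hk0 hklt
  linarith

private lemma aux_conj_eq
    (hmul : ∀ x y : K, x ≠ 0 → y ≠ 0 → v (x * y) = v x + v y)
    (hadd : ∀ x y : K, x ≠ 0 → y ≠ 0 → x + y ≠ 0 → min (v x) (v y) ≤ v (x + y))
    {m : ℕ} (hm : 1 ≤ m) {w : K} (hw : IsPrimitiveRoot w (p ^ m))
    {k : ℕ} (hk0 : 0 < k) (hklt : k < p ^ m) (hco : k.Coprime (p ^ m)) :
    v (w ^ k - 1) = v (w - 1) := by
  have hppos : 0 < p ^ m := pow_pos hp.out.pos m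
  have hp1 : 1 < p ^ m := Nat.one_lt_pow (by omega) hp.out.one_lt
  obtain ⟨k', -, hk'⟩ := Nat.exists_mul_mod_eq_one_of_coprime hco hp1
  set k'' := k' % p ^ m with hk''def
  have hmod : k * k'' % p ^ m = 1 := by
    rw [hk''def, Nat.mul_mod, Nat.mod_mod_of_dvd _ dvd_rfl, ← Nat.mul_mod]
    exact hk'
  have hk''0 : 0 < k'' := by
    rcases Nat.eq_zero_or_pos k'' with h | h
    · rw [h, mul_zero, Nat.zero_mod] at hmod; omega
    · exact h
  have hk''lt : k'' < p ^ m := Nat.mod_lt _ hppos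
  have hwk : (w ^ k) ^ k'' = w := by
    rw [← pow_mul]
    have hdiv := Nat.div_add_mod (k * k'') (p ^ m)
    rw [hmod] at hdiv
    calc w ^ (k * k'') = w ^ (p ^ m * (k * k'' / p ^ m) + 1) := by rw [hdiv]
      _ = (w ^ (p ^ m)) ^ (k * k'' / p ^ m) * w := by rw [pow_add, pow_mul, pow_one]
      _ = w := by rw [hw.pow_eq_one, one_pow, one_mul]
  have hw' : IsPrimitiveRoot (w ^ k) (p ^ m) := hw.pow_of_coprime k hco
  have h1 := aux_geom_le v hmul hadd hm hw hk0 hklt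
  have h2 := aux_geom_le v hmul hadd hm hw' hk''0 hk''lt
  rw [hwk] at h2
  linarith

private lemma aux_vroot
    (hmul : ∀ x y : K, x ≠ 0 → y ≠ 0 → v (x * y) = v x + v y)
    (hadd : ∀ x y : K, x ≠ 0 → y ≠ 0 → x + y ≠ 0 → min (v x) (v y) ≤ v (x + y))
    {m : ℕ} (hm : 1 ≤ m) {w : K} (hw : IsPrimitiveRoot w (p ^ m))
    (hvp : v ((p : ℕ) : K) = 1) :
    v (w - 1) = 1 / ((p ^ m).totient : ℚ) := by
  have hppos : 0 < p ^ m := pow_pos hp.out.pos m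
  have hp1 : 1 < p ^ m := Nat.one_lt_pow (by omega) hp.out.one_lt
  haveI : NeZero (p ^ m) := ⟨hppos.ne'⟩
  obtain ⟨m', rfl⟩ : ∃ m', m = m' + 1 := ⟨m - 1, by omega⟩
  have hcyc := Polynomial.cyclotomic_eq_prod_X_sub_primitiveRoots hw
  have heval : Polynomial.eval 1 (Polynomial.cyclotomic (p ^ (m' + 1)) K) = (p : K) :=
    Polynomial.eval_one_cyclotomic_prime_pow m'
  rw [hcyc] at heval
  simp only [Polynomial.eval_prod, Polynomial.eval_sub, Polynomial.eval_X,
    Polynomial.eval_C] at heval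
  have hfac : ∀ μ ∈ primitiveRoots (p ^ (m' + 1)) K, (1 : K) - μ ≠ 0 := by
    intro μ hμ
    have hμ' := (mem_primitiveRoots hppos).1 hμ
    exact fun h0 => hμ'.ne_one hp1 (by linear_combination -h0)
  have hprod := aux_vprod v hmul (primitiveRoots (p ^ (m' + 1)) K) (fun μ => 1 - μ) hfac
  rw [heval] at hprod
  have hvals : ∀ μ ∈ primitiveRoots (p ^ (m' + 1)) K, v (1 - μ) = v (w - 1) := by
    intro μ hμ
    have hμ' := (mem_primitiveRoots hppos).1 hμ
    obtain ⟨i, hilt, hico, rfl⟩ := (hw.isPrimitiveRoot_iff).1 hμ'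
    have hi0 : 0 < i := by
      rcases Nat.eq_zero_or_pos i with h | h
      · exfalso; rw [h] at hico
        have := Nat.coprime_zero_left (p ^ (m' + 1))
        rw [this] at hico; omega
      · exact h
    have hne : w ^ i - 1 ≠ 0 :=
      sub_ne_zero.2 (hw.pow_ne_one_of_pos_of_lt hi0.ne' hilt)
    have h1 : (1 : K) - w ^ i = -(w ^ i - 1) := by ring
    rw [h1, aux_vneg v hmul hne]
    exact aux_conj_eq v hmul hadd hm hw hi0 hilt hico
  have hsum : ∑ μ ∈ primitiveRoots (p ^ (m' + 1)) K, v (1 - μ)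
      = ((p ^ (m' + 1)).totient : ℚ) * v (w - 1) := by
    rw [Finset.sum_congr rfl hvals, Finset.sum_const, hw.card_primitiveRoots]
    simp [mul_comm]
  rw [hsum, hvp] at hprod
  have htot : ((p ^ (m' + 1)).totient : ℚ) ≠ 0 := by
    have := Nat.totient_pos.2 hppos
    positivity
  field_simp
  linarith [hprod.2]

end RootAux

/-- Let `F ∈ ℤ_p[[X, Y]]` be a nonzero power series, written `F = p^a·G`
with `G ∉ p·ℤ_p[[X,Y]]`.  There are integers `b, c ≥ 0` and `n₀` such that for all pairs
`(w₁, w₂)` of `p`-power roots of unity with `ord(w₁) = m ≥ n₀` and `n − m` sufficiently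
large (`ord(w₂) = n`), one has `ord_p(F(w₁ − 1, w₂ − 1)) = a + b/φ(p^m) + c/φ(p^n)`.
Here the roots of unity live in a field `K` with an additive valuation `v` extending the
`p`-adic valuation of `ℤ_p`, and `F(w₁ − 1, w₂ − 1)` is taken to be any element `y` to
which the partial sums of the series converge. -/
theorem weierstrass_valuation_of_power_series (p : ℕ) [Fact p.Prime] (hodd : Odd p)
    (K : Type*) [Field K] [Algebra ℤ_[p] K] (v : K → ℚ)
    (hmul : ∀ x y : K, x ≠ 0 → y ≠ 0 → v (x * y) = v x + v y)
    (hadd : ∀ x y : K, x ≠ 0 → y ≠ 0 → x + y ≠ 0 → min (v x) (v y) ≤ v (x + y))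
    (hcompat : ∀ x : ℤ_[p], x ≠ 0 → v (algebraMap ℤ_[p] K x) = (x.valuation : ℚ))
    (F : MvPowerSeries (Fin 2) ℤ_[p]) (hF : F ≠ 0)
    (a : ℕ) (G : MvPowerSeries (Fin 2) ℤ_[p])
    (hFG : F = (MvPowerSeries.C (σ := Fin 2) (R := ℤ_[p]) ((p : ℤ_[p]) ^ a)) * G)
    (hG : ∃ d : (Fin 2) →₀ ℕ, ¬ (p : ℤ_[p]) ∣ MvPowerSeries.coeff (R := ℤ_[p]) d G) :
    ∃ (b c n₀ N : ℕ), ∀ m n : ℕ, n₀ ≤ m → m + N ≤ n →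
      ∀ w₁ w₂ : K, IsPrimitiveRoot w₁ (p ^ m) → IsPrimitiveRoot w₂ (p ^ n) →
      ∀ y : K,
        (∀ B : ℚ, ∃ D₀ : ℕ, ∀ D : ℕ, D₀ ≤ D →
          (y = ∑ d ∈ Finset.range D ×ˢ Finset.range D,
              algebraMap ℤ_[p] K
                (MvPowerSeries.coeff (R := ℤ_[p]) (Finsupp.single 0 d.1 + Finsupp.single 1 d.2) F) *
                (w₁ - 1) ^ d.1 * (w₂ - 1) ^ d.2) ∨
          B ≤ v (y - ∑ d ∈ Finset.range D ×ˢ Finset.range D,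
              algebraMap ℤ_[p] K
                (MvPowerSeries.coeff (R := ℤ_[p]) (Finsupp.single 0 d.1 + Finsupp.single 1 d.2) F) *
                (w₁ - 1) ^ d.1 * (w₂ - 1) ^ d.2)) →
        v y = (a : ℚ) + (b : ℚ) / ((p ^ m).totient : ℚ) + (c : ℚ) / ((p ^ n).totient : ℚ) := by
  classical
  have hp := (Fact.out : p.Prime)
  have hp3 : 3 ≤ p := by
    have h2 := hp.two_le
    rcases Nat.eq_or_lt_of_le h2 with h | h
    · exfalso; rw [← h] at hodd; exact (by decide : ¬ Odd 2) hodd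
    · omega
  -- the minimal indices
  set g : ℕ → ℕ → ℤ_[p] := fun i j =>
    MvPowerSeries.coeff (R := ℤ_[p]) (Finsupp.single 0 i + Finsupp.single 1 j) G with hgdef
  set P : ℕ → ℕ → Prop := fun i j => ¬ (p : ℤ_[p]) ∣ g i j with hPdef
  have hPne : ∃ i, ∃ j, P i j := by
    obtain ⟨d, hd⟩ := hG
    refine ⟨d 0, d 1, ?_⟩
    have hdeq : (Finsupp.single (0 : Fin 2) (d 0) + Finsupp.single 1 (d 1)) = d := by
      ext x; fin_cases x <;> simp [Finsupp.single_apply]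
    simpa [hPdef, hgdef, hdeq] using hd
  set b := sInf {i | ∃ j, P i j} with hbdef
  have hbmem : b ∈ {i | ∃ j, P i j} := Nat.sInf_mem (by obtain ⟨i, hi⟩ := hPne; exact ⟨i, hi⟩)
  set c := sInf {j | P b j} with hcdef
  have hcmem : P b c := Nat.sInf_mem (s := {j | P b j}) hbmem
  refine ⟨b, c, b + c + 2, c + 1, ?_⟩
  intro m n hm hn w₁ w₂ h₁ h₂ y hy
  have hm1 : 1 ≤ m := by omega
  have hn1 : 1 ≤ n := by omega
  have hmn : m ≤ n := by omega
  -- totient facts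
  have hφm : (p ^ m).totient = p ^ (m - 1) * (p - 1) := Nat.totient_prime_pow hp (by omega)
  have hφn : (p ^ n).totient = p ^ (n - 1) * (p - 1) := Nat.totient_prime_pow hp (by omega)
  have hφmpos : 0 < (p ^ m).totient := Nat.totient_pos.2 (pow_pos hp.pos m)
  have hφnpos : 0 < (p ^ n).totient := Nat.totient_pos.2 (pow_pos hp.pos n)
  have h2pow : 2 ^ m ≤ (p ^ m).totient := by
    rw [hφm]
    calc 2 ^ m = 2 ^ (m - 1) * 2 := by
          rw [← pow_succ]; congr 1; omega
      _ ≤ p ^ (m - 1) * (p - 1) :=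
          Nat.mul_le_mul (Nat.pow_le_pow_left (by omega) _) (by omega)
  have hbc_lt : b + c < (p ^ m).totient := by
    have := Nat.lt_two_pow_self (n := m)
    omega
  have hφmn : (p ^ n).totient = p ^ (n - m) * (p ^ m).totient := by
    rw [hφm, hφn, ← mul_assoc, ← pow_add]
    congr 2
    omega
  have hc_lt : c < p ^ (n - m) := by
    have h1 : c < 2 ^ (c + 1) := by
      have := Nat.lt_two_pow_self (n := c)
      calc c < 2 ^ c := this
        _ ≤ 2 ^ (c + 1) := Nat.pow_le_pow_right (by omega) (by omega)
    calc c < 2 ^ (c + 1) := h1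
      _ ≤ p ^ (c + 1) := Nat.pow_le_pow_left (by omega) _
      _ ≤ p ^ (n - m) := Nat.pow_le_pow_right hp.pos (by omega)
  have hφm_le : (p ^ m).totient ≤ (p ^ n).totient := by
    rw [hφm, hφn]
    exact Nat.mul_le_mul_right _ (Nat.pow_le_pow_right hp.pos (by omega))
  -- valuations of w₁ - 1, w₂ - 1
  have hvp : v ((p : ℕ) : K) = 1 := by
    have hpne : ((p : ℤ_[p])) ≠ 0 := Nat.cast_ne_zero.2 hp.ne_zero
    have h1 := hcompat (p : ℤ_[p]) hpne
    rw [map_natCast, PadicInt.valuation_p] at h1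
    rw [h1]; norm_num
  have hα := aux_vroot v hmul hadd hm1 h₁ hvp
  have hβ := aux_vroot v hmul hadd hn1 h₂ hvp
  have hw₁ne : w₁ - 1 ≠ 0 :=
    sub_ne_zero.2 (h₁.ne_one (Nat.one_lt_pow (by omega) hp.one_lt))
  have hw₂ne : w₂ - 1 ≠ 0 :=
    sub_ne_zero.2 (h₂.ne_one (Nat.one_lt_pow (by omega) hp.one_lt))
  set φmq : ℚ := ((p ^ m).totient : ℚ) with hφmq
  set φnq : ℚ := ((p ^ n).totient : ℚ) with hφnq
  have hφmq0 : 0 < φmq := by rw [hφmq]; exact_mod_cast hφmpos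
  have hφnq0 : 0 < φnq := by rw [hφnq]; exact_mod_cast hφnpos
  -- the terms of the series
  set f : ℕ × ℕ → K := fun d =>
    algebraMap ℤ_[p] K
      (MvPowerSeries.coeff (R := ℤ_[p]) (Finsupp.single 0 d.1 + Finsupp.single 1 d.2) F) *
      (w₁ - 1) ^ d.1 * (w₂ - 1) ^ d.2 with hfdef
  have hcoeffF : ∀ i j : ℕ,
      MvPowerSeries.coeff (R := ℤ_[p]) (Finsupp.single 0 i + Finsupp.single 1 j) F
        = (p : ℤ_[p]) ^ a * g i j := by
    intro i j
    rw [hFG, MvPowerSeries.coeff_C_mul]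
  have hpne : ((p : ℤ_[p])) ≠ 0 := Nat.cast_ne_zero.2 hp.ne_zero
  -- value of a nonzero term
  have hfval : ∀ i j : ℕ, g i j ≠ 0 →
      f (i, j) ≠ 0 ∧
        v (f (i, j)) = ((a : ℚ) + ((g i j).valuation : ℚ)) + (i : ℚ) / φmq + (j : ℚ) / φnq := by
    intro i j hg
    have hFij : MvPowerSeries.coeff (R := ℤ_[p]) (Finsupp.single 0 i + Finsupp.single 1 j) F ≠ 0 := by
      rw [hcoeffF i j]
      exact mul_ne_zero (pow_ne_zero _ hpne) hg
    have hmapne := aux_map_ne v hcompat hFij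
    have hXne : (w₁ - 1) ^ i ≠ 0 := pow_ne_zero _ hw₁ne
    have hYne : (w₂ - 1) ^ j ≠ 0 := pow_ne_zero _ hw₂ne
    constructor
    · exact mul_ne_zero (mul_ne_zero hmapne hXne) hYne
    · have h1 : v (f (i, j)) =
          v (algebraMap ℤ_[p] K
            (MvPowerSeries.coeff (R := ℤ_[p]) (Finsupp.single 0 i + Finsupp.single 1 j) F))
          + v ((w₁ - 1) ^ i) + v ((w₂ - 1) ^ j) := by
        rw [hfdef]
        dsimp only
        rw [hmul _ _ (mul_ne_zero hmapne hXne) hYne, hmul _ _ hmapne hXne]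
      rw [h1, hcompat _ hFij, aux_vpow v hmul hw₁ne i, aux_vpow v hmul hw₂ne j, hα, hβ]
      rw [hcoeffF i j, PadicInt.valuation_p_pow_mul a _ hg]
      push_cast
      ring
  -- value of the distinguished term
  have hgbc : g b c ≠ 0 ∧ (g b c).valuation = 0 := aux_val_of_not_dvd hcmem
  have hfbc := hfval b c hgbc.1
  have hVbc : v (f (b, c)) = (a : ℚ) + (b : ℚ) / φmq + (c : ℚ) / φnq := by
    rw [hfbc.2, hgbc.2]
    norm_num
  -- strict domination of all other terms
  have hstrict : ∀ s : ℕ × ℕ, s ≠ (b, c) → f s = 0 ∨ v (f (b, c)) < v (f s) := by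
    rintro ⟨i, j⟩ hne
    by_cases hg : g i j = 0
    · left
      rw [hfdef]
      dsimp only
      rw [hcoeffF i j, hg, mul_zero, map_zero, zero_mul, zero_mul]
    · right
      rw [hVbc, (hfval i j hg).2]
      have hvalnn : (0 : ℤ) ≤ (g i j).valuation := Int.natCast_nonneg _
      have hiq : (0 : ℚ) ≤ (i : ℚ) / φmq := by positivity
      have hjq : (0 : ℚ) ≤ (j : ℚ) / φnq := by positivity
      by_cases hP : P i j
      · have he0 : (g i j).valuation = 0 := (aux_val_of_not_dvd hP).2
        have hib : b ≤ i := Nat.sInf_le ⟨j, hP⟩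
        rcases Nat.eq_or_lt_of_le hib with hbi | hbi
        · -- i = b, hence j > c
          have hjc : c ≤ j := Nat.sInf_le (by rw [hbi]; exact hP)
          have hjc' : c < j := by
            rcases Nat.eq_or_lt_of_le hjc with h | h
            · exact absurd (by rw [← hbi, ← h] : (i, j) = (b, c)) hne
            · exact h
          rw [he0, ← hbi]
          have hdiv : (c : ℚ) / φnq < (j : ℚ) / φnq := by
            rw [div_lt_div_iff₀ hφnq0 hφnq0]
            have : (c : ℚ) < (j : ℚ) := by exact_mod_cast hjc'
            exact mul_lt_mul_of_pos_right this hφnq0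
          push_cast
          linarith
        · -- i > b
          rw [he0]
          have hkey : (c : ℚ) / φnq < 1 / φmq := by
            rw [div_lt_div_iff₀ hφnq0 hφmq0, one_mul]
            have h1 : φnq = (p : ℚ) ^ (n - m) * φmq := by
              rw [hφnq, hφmq, hφmn]; push_cast; ring
            have h2 : (c : ℚ) < (p : ℚ) ^ (n - m) := by exact_mod_cast hc_lt
            calc (c : ℚ) * φmq < (p : ℚ) ^ (n - m) * φmq :=
                  mul_lt_mul_of_pos_right h2 hφmq0
              _ = φnq := h1.symm
          have hi1 : (b : ℚ) + 1 ≤ (i : ℚ) := by exact_mod_cast hbi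
          have h3 : ((b : ℚ) + 1) / φmq ≤ (i : ℚ) / φmq := by
            rw [div_le_div_iff₀ hφmq0 hφmq0]
            exact mul_le_mul_of_nonneg_right hi1 hφmq0.le
          have hsplit : ((b : ℚ) + 1) / φmq = (b : ℚ) / φmq + 1 / φmq := by ring
          push_cast
          linarith
      · have he1 : (1 : ℤ) ≤ (g i j).valuation := by exact_mod_cast aux_val_of_dvd hg (not_not.1 hP)
        have he1q : (1 : ℚ) ≤ ((g i j).valuation : ℚ) := by exact_mod_cast he1
        have hsmall : (b : ℚ) / φmq + (c : ℚ) / φnq < 1 := by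
          have h1 : (c : ℚ) / φnq ≤ (c : ℚ) / φmq := by
            apply div_le_div_of_nonneg_left (by positivity) hφmq0
            rw [hφmq, hφnq]; exact_mod_cast hφm_le
          have h2 : (b : ℚ) / φmq + (c : ℚ) / φmq < 1 := by
            rw [← add_div, div_lt_one hφmq0]
            rw [hφmq]; push_cast; exact_mod_cast hbc_lt
          linarith
        linarith
  -- conclude using the convergence hypothesis
  obtain ⟨D₀, hD₀⟩ := hy ((a : ℚ) + (b : ℚ) / φmq + (c : ℚ) / φnq + 1)
  set D := max D₀ (max b c + 1) with hDdef
  have hmemD : (b, c) ∈ Finset.range D ×ˢ Finset.range D := by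
    rw [Finset.mem_product, Finset.mem_range, Finset.mem_range]
    constructor <;> omega
  have hsum := aux_vsum v hmul hadd (Finset.range D ×ˢ Finset.range D) f (b, c) hmemD hfbc.1
    (fun s _ hs => hstrict s hs)
  rcases hD₀ D (le_max_left _ _) with hcase | hcase
  · rw [hcase]
    rw [show (∑ d ∈ Finset.range D ×ˢ Finset.range D,
        algebraMap ℤ_[p] K
          (MvPowerSeries.coeff (R := ℤ_[p]) (Finsupp.single 0 d.1 + Finsupp.single 1 d.2) F) *
          (w₁ - 1) ^ d.1 * (w₂ - 1) ^ d.2) = ∑ s ∈ Finset.range D ×ˢ Finset.range D, f s from rfl]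
    rw [hsum.2, hVbc]
  · set S := ∑ d ∈ Finset.range D ×ˢ Finset.range D,
        algebraMap ℤ_[p] K
          (MvPowerSeries.coeff (R := ℤ_[p]) (Finsupp.single 0 d.1 + Finsupp.single 1 d.2) F) *
          (w₁ - 1) ^ d.1 * (w₂ - 1) ^ d.2 with hSdef
    have hSf : S = ∑ s ∈ Finset.range D ×ˢ Finset.range D, f s := rfl
    by_cases hy0 : y - S = 0
    · rw [sub_eq_zero] at hy0
      rw [hy0, hSf, hsum.2, hVbc]
    · have hvS : v S = (a : ℚ) + (b : ℚ) / φmq + (c : ℚ) / φnq := by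
        rw [hSf, hsum.2, hVbc]
      have hkey := aux_vadd v hmul hadd (x := S) (y := y - S) (by rw [hSf]; exact hsum.1) hy0
        (by rw [hvS]; linarith [hcase])
      have : S + (y - S) = y := by ring
      rw [this] at hkey
      rw [hkey.2, hvS]
end

section
/- Let p be an odd prime and r, s, r', s' positive integers with r ≠ r' or s ≠ s'. Suppose two rational numbers have the forms V = v + h(r,♯or♭) + h(s,♯or♭) + b/φ(p^r) + c/φ(p^s) and V' = v' + h(r,·) + h(s,·) + b'/φ(p^r) + c'/φ(p^s), where v, v', b, c, b', c' are integers and h(n,♯), h(n,♭) are the explicit valuations from Proposition 5.11 (e.g., h(n,♯) = 1 + Σ_{i=1}^{(n−1)/2} p^{1−2i} for odd n). If the ♯/♭ labels differ in at least one coordinate, then V ≠ V' for all r, s with r, s, |r−s| sufficiently large. -/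
open Finset

/-- The explicit valuations `h(n, ♯)` and `h(n, ♭)` from Proposition 5.11 of the paper
(`true` stands for `♯`, `false` for `♭`). -/
noncomputable def hval (p n : ℕ) : Bool → ℚ
  | true =>
      if Odd n then 1 + ∑ i ∈ Finset.Icc 1 ((n - 1) / 2), (p : ℚ) ^ (1 - 2 * (i : ℤ))
      else ∑ i ∈ Finset.Icc 1 (n / 2), (p : ℚ) ^ (1 - 2 * (i : ℤ))
  | false =>
      if Odd n then ∑ i ∈ Finset.Icc 1 ((n - 1) / 2), (p : ℚ) ^ (-(2 * (i : ℤ)))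
      else 1 + ∑ i ∈ Finset.Icc 1 (n / 2 - 1), (p : ℚ) ^ (-(2 * (i : ℤ)))

/-- Geometric sum evaluation. -/
lemma geom_aux (x : ℚ) (hx : x ≠ 0) (m : ℕ) :
    (x^2 - 1) * ∑ i ∈ Icc 1 m, x ^ (-(2 * (i:ℤ))) = 1 - x ^ (-(2*(m:ℤ))) := by
  induction m with
  | zero => simp
  | succ m ih =>
      rw [Finset.sum_Icc_succ_top (by omega), mul_add, ih]
      have h1 : x ^ (-(2 * ((m:ℤ)+1))) = x ^ (-(2*(m:ℤ))) * (x^2)⁻¹ := by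
        rw [← zpow_natCast x 2, ← zpow_neg, ← zpow_add₀ hx]
        ring_nf
      have h2 : ((m+1 : ℕ) : ℤ) = (m:ℤ) + 1 := by push_cast; ring
      rw [h2, h1]
      have hx2 : x^2 ≠ 0 := pow_ne_zero 2 hx
      field_simp
      ring

lemma sum_shift_aux (x : ℚ) (hx : x ≠ 0) (m : ℕ) :
    ∑ i ∈ Icc 1 m, x ^ (1 - 2 * (i:ℤ)) = x * ∑ i ∈ Icc 1 m, x ^ (-(2 * (i:ℤ))) := by
  rw [Finset.mul_sum]
  refine Finset.sum_congr rfl fun i _ => ?_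
  rw [show (1 - 2*(i:ℤ)) = 1 + (-(2*(i:ℤ))) by ring, zpow_add₀ hx, zpow_one]

/-- The difference `h(n,♯) - h(n,♭)` in closed form. -/
lemma hval_tf (p n : ℕ) (hx : (p:ℚ) ≠ 0) (hn : 1 ≤ n) :
    ((p:ℚ)^2-1) * (hval p n true - hval p n false) =
    (if Odd n then ((p:ℚ)^2-1)+((p:ℚ)-1) - ((p:ℚ)-1) * (p:ℚ)^((1:ℤ)-n)
     else (p:ℚ)-(p:ℚ)^2 + ((p:ℚ)-1) * (p:ℚ)^((1:ℤ)-n)) := by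
  unfold hval
  by_cases hodd : Odd n
  · simp only [hodd, if_true]
    obtain ⟨k, hk⟩ := hodd
    have hm : (n - 1) / 2 = k := by omega
    have he : -(2 * ((k:ℕ):ℤ)) = 1 - (n:ℤ) := by
      have : (n:ℤ) = 2*k+1 := by exact_mod_cast congrArg Nat.cast hk
      omega
    have g := geom_aux (p:ℚ) hx k
    rw [he] at g
    rw [hm, sum_shift_aux (p:ℚ) hx k]
    linear_combination ((p:ℚ) - 1) * g
  · simp only [hodd, if_false]
    have heven : 2 ∣ n := by
      rcases Nat.even_or_odd n with h | h
      · exact h.two_dvd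
      · exact absurd h hodd
    obtain ⟨k, hk⟩ := heven
    have hk1 : 1 ≤ k := by omega
    have hm1 : n / 2 = k := by omega
    have ga := geom_aux (p:ℚ) hx k
    have gb := geom_aux (p:ℚ) hx (k-1)
    have hea : -(2 * ((k:ℕ):ℤ)) = -(n:ℤ) := by
      have : (n:ℤ) = 2*k := by exact_mod_cast congrArg Nat.cast hk
      omega
    have heb : -(2 * (((k-1):ℕ):ℤ)) = 2-(n:ℤ) := by
      have h1 : (n:ℤ) = 2*k := by exact_mod_cast congrArg Nat.cast hk
      have h2 : (((k-1):ℕ):ℤ) = (k:ℤ) - 1 := by omega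
      omega
    rw [hea] at ga
    rw [heb] at gb
    rw [hm1, sum_shift_aux (p:ℚ) hx k]
    have hxn : (p:ℚ) ^ (2-(n:ℤ)) = (p:ℚ)^2 * (p:ℚ)^(-(n:ℤ))  := by
      rw [← zpow_natCast (p:ℚ) 2, ← zpow_add₀ hx]; ring_nf
    have hxn2 : (p:ℚ) ^ ((1:ℤ)-n) = (p:ℚ) * (p:ℚ)^(-(n:ℤ)) := by
      rw [show (1:ℤ)-(n:ℤ) = 1 + (-(n:ℤ)) by ring, zpow_add₀ hx, zpow_one]
    rw [hxn] at gb
    rw [show (-(n:ℤ)) = (-n:ℤ) from rfl] at ga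
    linear_combination (p:ℚ) * ga - gb + ((p:ℚ)^2-1)*hxn2 - ((p:ℚ)-1)*(p:ℚ)*hxn2 + (2-2*(p:ℚ))*hxn2

/-- The difference of two `hval`s with arbitrary labels. -/
lemma hval_diff (p n : ℕ) (hx : (p:ℚ) ≠ 0) (hn : 1 ≤ n) (a a' : Bool) :
    ((p:ℚ)^2-1) * (hval p n a - hval p n a') =
      ((((if a then 1 else 0) - (if a' then 1 else 0) : ℤ)):ℚ) *
      (((if Odd n then ((p:ℤ)^2-1)+((p:ℤ)-1) else (p:ℤ)-(p:ℤ)^2 : ℤ):ℚ)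
        + (((if Odd n then (-1:ℤ) else 1):ℤ):ℚ) * ((p:ℚ)-1) * (p:ℚ)^((1:ℤ)-(n:ℤ))) := by
  have h := hval_tf p n hx hn
  cases a <;> cases a'
  · simp
  · rw [show hval p n false - hval p n true = -(hval p n true - hval p n false) by ring,
      mul_neg, h]
    split_ifs
    all_goals first
      | exact absurd rfl (by assumption : ¬(true = true))
      | exact (by assumption : False).elim
      | (push_cast; ring)
  · rw [h]
    split_ifs
    all_goals first
      | exact absurd rfl (by assumption : ¬(true = true))
      | exact (by assumption : False).elim
      | (push_cast; ring)
  · simp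

lemma int_contra (p : ℕ) (hp2 : 2 ≤ p) (M Nr Ns : ℤ) (a b K : ℕ)
    (hbr : |Nr| ≤ (K:ℤ)) (hbs : |Ns| ≤ (K:ℤ))
    (hb : K + 1 ≤ b) (hab : b + K + 2 ≤ a)
    (heq : M * (p:ℤ)^a * (p:ℤ)^b + Nr * (p:ℤ)^b + Ns * (p:ℤ)^a = 0)
    (hor : Nr ≠ 0 ∨ Ns ≠ 0) : False := by
  have hp0 : (p:ℤ) ≠ 0 := by exact_mod_cast (by omega : p ≠ 0)
  obtain ⟨m, rfl⟩ : ∃ m, a = m + b := ⟨a - b, by omega⟩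
  have hKb : (K:ℤ) < (p:ℤ)^b := by
    have h1 : K < 2^b := lt_of_lt_of_le (Nat.lt_two_pow_self (n := K)) (Nat.pow_le_pow_right (by norm_num) (by omega))
    have h2 : (2:ℕ)^b ≤ p^b := Nat.pow_le_pow_left hp2 b
    exact_mod_cast lt_of_lt_of_le h1 h2
  have hKab : (K:ℤ) < (p:ℤ)^m := by
    have h1 : K < 2^m := lt_of_lt_of_le (Nat.lt_two_pow_self (n := K)) (Nat.pow_le_pow_right (by norm_num) (by omega))
    have h2 : (2:ℕ)^m ≤ p^m := Nat.pow_le_pow_left hp2 m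
    exact_mod_cast lt_of_lt_of_le h1 h2
  rw [pow_add] at heq
  by_cases hNr : Nr = 0
  · have hNs : Ns ≠ 0 := hor.resolve_left (not_not.mpr hNr)
    have h1 : ((p:ℤ)^m * (p:ℤ)^b) * (M * (p:ℤ)^b + Ns) = 0 := by
      rw [hNr] at heq; linear_combination heq
    have h2 : M * (p:ℤ)^b + Ns = 0 :=
      (mul_eq_zero.mp h1).resolve_left (mul_ne_zero (pow_ne_zero m hp0) (pow_ne_zero b hp0))
    have hdvd : (p:ℤ)^b ∣ Ns := ⟨-M, by linarith⟩
    have := Int.le_of_dvd (abs_pos.mpr hNs) ((dvd_abs _ _).mpr hdvd)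
    linarith
  · have h1 : Nr * (p:ℤ)^b = ((p:ℤ)^m * (-(M * (p:ℤ)^b) - Ns)) * (p:ℤ)^b := by
      linear_combination heq
    have h2 : Nr = (p:ℤ)^m * (-(M * (p:ℤ)^b) - Ns) :=
      mul_right_cancel₀ (pow_ne_zero b hp0) h1
    have hdvd : (p:ℤ)^m ∣ Nr := ⟨_, h2⟩
    have := Int.le_of_dvd (abs_pos.mpr hNr) ((dvd_abs _ _).mpr hdvd)
    linarith

lemma coef_ne (p : ℕ) (hp3 : 3 ≤ p) (e d B : ℤ) (he : |e| = 1) (hd : |d| = 1) :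
    e*d*((p:ℤ)-1) + B*((p:ℤ)+1) ≠ 0 := by
  intro h0
  have hq : (3:ℤ) ≤ (p:ℤ) := by exact_mod_cast hp3
  have h2 : B*((p:ℤ)+1) = -(e*d*((p:ℤ)-1)) := by linarith
  have h3 := congrArg abs h2
  rw [abs_mul, abs_neg, abs_mul, abs_mul, he, hd,
    abs_of_nonneg (show (0:ℤ) ≤ (p:ℤ)+1 by linarith),
    abs_of_nonneg (show (0:ℤ) ≤ (p:ℤ)-1 by linarith)] at h3
  have hB0 := abs_nonneg B
  rcases eq_or_lt_of_le hB0 with h|h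
  · rw [← h] at h3; simp at h3; linarith
  · have h4 : 1 ≤ |B| := h
    nlinarith

lemma ediff_abs (a a' : Bool) (h : a ≠ a') :
    |((if a then (1:ℤ) else 0) - (if a' then 1 else 0))| = 1 := by
  cases a <;> cases a' <;> simp_all

set_option maxHeartbeats 1600000 in
/-- Consider `V = v + h(r,·) + h(s,·) + b/φ(p^r) + c/φ(p^s)` and
`V' = v' + h(r,·) + h(s,·) + b'/φ(p^r) + c'/φ(p^s)` with integer constants, where the
`♯/♭` labels of `V` and `V'` differ in at least one coordinate.  Then `V ≠ V'` for all
`r, s` with `r`, `s`, `|r − s|` sufficiently large. -/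
theorem sharp_flat_valuations_distinct (p : ℕ) (hp : p.Prime) (hodd : Odd p)
    (v v' b c b' c' : ℤ) (s₁ s₂ s₁' s₂' : Bool)
    (hdiff : s₁ ≠ s₁' ∨ s₂ ≠ s₂') :
    ∃ N : ℕ, ∀ r s : ℕ, N ≤ r → N ≤ s → (N : ℤ) ≤ |(r : ℤ) - (s : ℤ)| →
      (v : ℚ) + hval p r s₁ + hval p s s₂ +
          (b : ℚ) / ((p ^ r).totient : ℚ) + (c : ℚ) / ((p ^ s).totient : ℚ) ≠
        (v' : ℚ) + hval p r s₁' + hval p s s₂' +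
          (b' : ℚ) / ((p ^ r).totient : ℚ) + (c' : ℚ) / ((p ^ s).totient : ℚ) := by
  have hp2 : p ≠ 2 := by rintro rfl; revert hodd; decide
  have hp3 : 3 ≤ p := by have := hp.two_le; omega
  have hx0 : (p:ℚ) ≠ 0 := Nat.cast_ne_zero.mpr (by omega)
  have hq3 : (3:ℤ) ≤ (p:ℤ) := by exact_mod_cast hp3
  set e₁ : ℤ := (if s₁ then 1 else 0) - (if s₁' then 1 else 0) with he₁
  set e₂ : ℤ := (if s₂ then 1 else 0) - (if s₂' then 1 else 0) with he₂
  set B : ℤ := b - b' with hB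
  set C : ℤ := c - c' with hC
  set K : ℕ := (p+1) * (1 + B.natAbs + C.natAbs) with hK
  have he1b : |e₁| ≤ 1 := by rw [he₁]; cases s₁ <;> cases s₁' <;> decide
  have he2b : |e₂| ≤ 1 := by rw [he₂]; cases s₂ <;> cases s₂' <;> decide
  have hKc : (K:ℤ) = ((p:ℤ)+1)*(1+|B|+|C|) := by
    rw [hK]; push_cast [Int.natCast_natAbs]; ring
  refine ⟨K + 2, fun r s hr hs hgap heq => ?_⟩
  have hr1 : 1 ≤ r := by omega
  have hs1 : 1 ≤ s := by omega
  set δr : ℤ := if Odd r then -1 else 1 with hδr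
  set δs : ℤ := if Odd s then -1 else 1 with hδs
  set μr : ℤ := if Odd r then ((p:ℤ)^2-1)+((p:ℤ)-1) else (p:ℤ)-(p:ℤ)^2 with hμr
  set μs : ℤ := if Odd s then ((p:ℤ)^2-1)+((p:ℤ)-1) else (p:ℤ)-(p:ℤ)^2 with hμs
  set Nr : ℤ := e₁*δr*((p:ℤ)-1) + B*((p:ℤ)+1) with hNrd
  set Ns : ℤ := e₂*δs*((p:ℤ)-1) + C*((p:ℤ)+1) with hNsd
  set M : ℤ := (v-v')*((p:ℤ)^2-1) + e₁*μr + e₂*μs with hM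
  have hδrb : |δr| = 1 := by rw [hδr]; split_ifs <;> decide
  have hδsb : |δs| = 1 := by rw [hδs]; split_ifs <;> decide
  -- totient facts
  have htr : ((p^r).totient:ℚ) = (p:ℚ)^(r-1)*((p:ℚ)-1) := by
    rw [Nat.totient_prime_pow hp hr1]
    push_cast [Nat.cast_sub hp.one_le]
    ring
  have hts : ((p^s).totient:ℚ) = (p:ℚ)^(s-1)*((p:ℚ)-1) := by
    rw [Nat.totient_prime_pow hp hs1]
    push_cast [Nat.cast_sub hp.one_le]
    ring
  have hpr0 : (p:ℚ)^(r-1) ≠ 0 := pow_ne_zero _ hx0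
  have hps0 : (p:ℚ)^(s-1) ≠ 0 := pow_ne_zero _ hx0
  have hxm1 : (p:ℚ) - 1 ≠ 0 := by
    have : (3:ℚ) ≤ (p:ℚ) := by exact_mod_cast hp3
    linarith
  have htr0 : ((p^r).totient:ℚ) ≠ 0 := by rw [htr]; exact mul_ne_zero hpr0 hxm1
  have hts0 : ((p^s).totient:ℚ) ≠ 0 := by rw [hts]; exact mul_ne_zero hps0 hxm1
  -- the hval differences
  have hd1 := hval_diff p r hx0 hr1 s₁ s₁'
  have hd2 := hval_diff p s hx0 hs1 s₂ s₂'
  rw [← he₁, ← hμr, ← hδr] at hd1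
  rw [← he₂, ← hμs, ← hδs] at hd2
  have hzr : (p:ℚ)^((1:ℤ)-(r:ℤ)) = ((p:ℚ)^(r-1))⁻¹ := by
    rw [show (1:ℤ)-(r:ℤ) = -(((r-1:ℕ)):ℤ) by omega, zpow_neg, zpow_natCast]
  have hzs : (p:ℚ)^((1:ℤ)-(s:ℤ)) = ((p:ℚ)^(s-1))⁻¹ := by
    rw [show (1:ℤ)-(s:ℤ) = -(((s-1:ℕ)):ℤ) by omega, zpow_neg, zpow_natCast]
  rw [hzr] at hd1
  rw [hzs] at hd2
  -- multiply the equation by (p^2-1)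
  have key0 : ((p:ℚ)^2-1) * ((v:ℚ)-(v':ℚ)) + ((p:ℚ)^2-1) * (hval p r s₁ - hval p r s₁')
      + ((p:ℚ)^2-1) * (hval p s s₂ - hval p s s₂')
      + ((b:ℚ)-(b':ℚ))*((p:ℚ)^2-1)/((p^r).totient:ℚ)
      + ((c:ℚ)-(c':ℚ))*((p:ℚ)^2-1)/((p^s).totient:ℚ) = 0 := by
    linear_combination ((p:ℚ)^2-1) * heq
  rw [hd1, hd2] at key0
  have hir : (p:ℚ)^(r-1) * ((p:ℚ)^(r-1))⁻¹ = 1 := mul_inv_cancel₀ hpr0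
  have his : (p:ℚ)^(s-1) * ((p:ℚ)^(s-1))⁻¹ = 1 := mul_inv_cancel₀ hps0
  have hterm_r : ((p:ℚ)^2-1)/((p^r).totient:ℚ) * ((p:ℚ)^(r-1) * (p:ℚ)^(s-1))
      = ((p:ℚ)+1)*(p:ℚ)^(s-1) := by
    rw [htr]; field_simp; ring
  have hterm_s : ((p:ℚ)^2-1)/((p^s).totient:ℚ) * ((p:ℚ)^(r-1) * (p:ℚ)^(s-1))
      = ((p:ℚ)+1)*(p:ℚ)^(r-1) := by
    rw [hts]; field_simp; ring
  have keyq : (((v:ℚ)-(v':ℚ))*((p:ℚ)^2-1) + (e₁:ℚ)*(μr:ℚ) + (e₂:ℚ)*(μs:ℚ)) * ((p:ℚ)^(r-1) * (p:ℚ)^(s-1))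
      + ((e₁:ℚ)*(δr:ℚ)*((p:ℚ)-1) + ((b:ℚ)-(b':ℚ))*((p:ℚ)+1)) * (p:ℚ)^(s-1)
      + ((e₂:ℚ)*(δs:ℚ)*((p:ℚ)-1) + ((c:ℚ)-(c':ℚ))*((p:ℚ)+1)) * (p:ℚ)^(r-1) = 0 := by
    linear_combination ((p:ℚ)^(r-1) * (p:ℚ)^(s-1)) * key0
      - ((e₁:ℚ)*(δr:ℚ)*((p:ℚ)-1)*(p:ℚ)^(s-1)) * hir
      - ((e₂:ℚ)*(δs:ℚ)*((p:ℚ)-1)*(p:ℚ)^(r-1)) * his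
      - ((b:ℚ)-(b':ℚ)) * hterm_r - ((c:ℚ)-(c':ℚ)) * hterm_s
  have keyZ : M * (p:ℤ)^(r-1) * (p:ℤ)^(s-1) + Nr * (p:ℤ)^(s-1) + Ns * (p:ℤ)^(r-1) = 0 := by
    have expand : (M:ℚ) * (p:ℚ)^(r-1) * (p:ℚ)^(s-1) + (Nr:ℚ) * (p:ℚ)^(s-1) + (Ns:ℚ) * (p:ℚ)^(r-1) = 0 := by
      push_cast [hM, hNrd, hNsd, hB, hC]
      linear_combination keyq
    exact_mod_cast expand
  -- bounds
  have habs_r : |Nr| ≤ (K:ℤ) := by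
    rw [hNrd, hKc]
    calc |e₁ * δr * ((p:ℤ)-1) + B * ((p:ℤ)+1)|
        ≤ |e₁ * δr * ((p:ℤ)-1)| + |B * ((p:ℤ)+1)| := abs_add_le _ _
      _ = |e₁| * |δr| * |(p:ℤ)-1| + |B| * |(p:ℤ)+1| := by rw [abs_mul, abs_mul, abs_mul]
      _ ≤ ((p:ℤ)+1)*(1+|B|+|C|) := by
          rw [hδrb, abs_of_nonneg (show (0:ℤ) ≤ (p:ℤ)-1 by linarith),
            abs_of_nonneg (show (0:ℤ) ≤ (p:ℤ)+1 by linarith)]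
          have t1 : |e₁| * ((p:ℤ)-1) ≤ (p:ℤ)-1 :=
            mul_le_of_le_one_left (by linarith) he1b
          have t2 : (0:ℤ) ≤ |C| * ((p:ℤ)+1) := mul_nonneg (abs_nonneg C) (by linarith)
          nlinarith [t1, t2, hq3, abs_nonneg B]
  have habs_s : |Ns| ≤ (K:ℤ) := by
    rw [hNsd, hKc]
    calc |e₂ * δs * ((p:ℤ)-1) + C * ((p:ℤ)+1)|
        ≤ |e₂ * δs * ((p:ℤ)-1)| + |C * ((p:ℤ)+1)| := abs_add_le _ _
      _ = |e₂| * |δs| * |(p:ℤ)-1| + |C| * |(p:ℤ)+1| := by rw [abs_mul, abs_mul, abs_mul]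
      _ ≤ ((p:ℤ)+1)*(1+|B|+|C|) := by
          rw [hδsb, abs_of_nonneg (show (0:ℤ) ≤ (p:ℤ)-1 by linarith),
            abs_of_nonneg (show (0:ℤ) ≤ (p:ℤ)+1 by linarith)]
          have t1 : |e₂| * ((p:ℤ)-1) ≤ (p:ℤ)-1 :=
            mul_le_of_le_one_left (by linarith) he2b
          have t2 : (0:ℤ) ≤ |B| * ((p:ℤ)+1) := mul_nonneg (abs_nonneg B) (by linarith)
          nlinarith [t1, t2, hq3, abs_nonneg C]
  -- at least one coefficient is nonzero
  have horn : Nr ≠ 0 ∨ Ns ≠ 0 := by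
    rcases hdiff with h|h
    · left; rw [hNrd]
      exact coef_ne p hp3 e₁ δr B (by rw [he₁]; exact ediff_abs s₁ s₁' h) hδrb
    · right; rw [hNsd]
      exact coef_ne p hp3 e₂ δs C (by rw [he₂]; exact ediff_abs s₂ s₂' h) hδsb
  -- split according to which of r, s is larger
  have hgap' : (K:ℤ) + 2 ≤ (r:ℤ) - s ∨ (K:ℤ) + 2 ≤ (s:ℤ) - r := by
    push_cast at hgap
    rcases abs_cases ((r:ℤ) - (s:ℤ)) with ⟨h1,_⟩|⟨h1,_⟩
    · left; linarith
    · right; linarith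
  rcases hgap' with h|h
  · have hrs : s + K + 2 ≤ r := by omega
    exact int_contra p hp.two_le M Nr Ns (r-1) (s-1) K habs_r habs_s (by omega) (by omega) keyZ horn
  · have hrs : r + K + 2 ≤ s := by omega
    exact int_contra p hp.two_le M Ns Nr (s-1) (r-1) K habs_s habs_r (by omega) (by omega)
      (by linear_combination keyZ) horn.symm
end
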